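/- arXiv:1212.3958 — 2 statements merged into one kernel-verified Lean document; each statement's English description precedes it below -/
import Mathlib

section
/- Uniqueness of the generating family: if β_t is a CPM with induced family (ρ^z_t)_{z∈(z_d,z_u)} and (σ^z_t)_{z∈(z_d,z_u)} is any standard family of conditional convex risk measures generating β_t, then σ^z_t(X) = ρ^z_t(X) for all z ∈ (z_d, z_u) and all X ∈ L^{bb}_T. -/
open MeasureTheory Filter Set Topology

noncomputable section

variable {Ω : Type*}

/-- The lattice of `m`-measurable random variables bounded from below
(possibly `+∞`-valued). -/
def Lbb (m : MeasurableSpace Ω) : Set (Ω → EReal) :=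
  {X | Measurable[m] X ∧ ∃ c : ℝ, ∀ ω, (c : EReal) ≤ X ω}

/-- `ρ` is the `P`-essential infimum of the family `S` of (`m`-measurable)
random variables. -/
def IsEssInfFam {F : MeasurableSpace Ω} (m : MeasurableSpace Ω) (P : @Measure Ω F)
    (S : Set (Ω → EReal)) (ρ : Ω → EReal) : Prop :=
  Measurable[m] ρ ∧ (∀ ξ ∈ S, ∀ᵐ ω ∂P, ρ ω ≤ ξ ω) ∧
    ∀ η : Ω → EReal, Measurable[m] η → (∀ ξ ∈ S, ∀ᵐ ω ∂P, η ω ≤ ξ ω) →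
      ∀ᵐ ω ∂P, η ω ≤ ρ ω

/-- `g` is, on the set `C`, the `P`-essential supremum of the family `S`. -/
def IsEssSupFamOn {F : MeasurableSpace Ω} (m : MeasurableSpace Ω) (P : @Measure Ω F)
    (S : Set (Ω → EReal)) (g : Ω → EReal) (C : Set Ω) : Prop :=
  (∀ φ ∈ S, ∀ᵐ ω ∂P, ω ∈ C → φ ω ≤ g ω) ∧
    ∀ η : Ω → EReal, Measurable[m] η → (∀ φ ∈ S, ∀ᵐ ω ∂P, ω ∈ C → φ ω ≤ η ω) →
      ∀ᵐ ω ∂P, ω ∈ C → g ω ≤ η ω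

/-- A conditional performance measure (CPM) `β` conditional to the sub-σ-algebra `m`,
defined on `F`-measurable variables bounded from below, with non-random essential
bounds `zd < zu`. -/
structure IsCPM (F m : MeasurableSpace Ω) (P : @Measure Ω F)
    (β : (Ω → EReal) → Ω → EReal) (zd zu : EReal) : Prop where
  maps : ∀ X ∈ Lbb F, β X ∈ Lbb m
  quasiConcave : ∀ X ∈ Lbb F, ∀ Y ∈ Lbb F, ∀ c : ℝ, 0 ≤ c → c ≤ 1 →
    ∀ᵐ ω ∂P, min (β X ω) (β Y ω) ≤
      β (fun ω' => (c : EReal) * X ω' + ((1 - c : ℝ) : EReal) * Y ω') ω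
  lt_bounds : zd < zu
  le_zu : ∀ X ∈ Lbb F, ∀ᵐ ω ∂P, β X ω ≤ zu
  zu_least : ∀ η : Ω → EReal, Measurable[m] η →
    (∀ X ∈ Lbb F, ∀ᵐ ω ∂P, β X ω ≤ η ω) → ∀ᵐ ω ∂P, zu ≤ η ω
  zd_le : ∀ X ∈ Lbb F, ∀ᵐ ω ∂P, zd ≤ β X ω
  zd_greatest : ∀ η : Ω → EReal, Measurable[m] η →
    (∀ X ∈ Lbb F, ∀ᵐ ω ∂P, η ω ≤ β X ω) → ∀ᵐ ω ∂P, η ω ≤ zd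
  mono : ∀ X Y : Ω → EReal, (∀ ω, Y ω ≤ X ω) → ∀ᵐ ω ∂P, β Y ω ≤ β X ω
  strictShift : ∀ X ∈ Lbb F, ∀ c : ℝ, 0 < c →
    ∀ᵐ ω ∂P, β X ω < zu → zd < β (fun ω' => X ω' + (c : EReal)) ω →
      β X ω < β (fun ω' => X ω' + (c : EReal)) ω
  contBelow : ∀ (Xs : ℕ → Ω → EReal) (X : Ω → EReal), (∀ n, Xs n ∈ Lbb F) → X ∈ Lbb F →
    (∀ ω, Monotone fun n => Xs n ω) → (∀ ω, X ω = ⨆ n, Xs n ω) →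
    ∀ᵐ ω ∂P, β X ω = ⨆ n, β (Xs n) ω
  loc : ∀ X ∈ Lbb F, ∀ B : Set Ω, MeasurableSet[m] B →
    ∀ᵐ ω ∂P, ω ∈ B → β X ω = β (B.indicator X) ω
  levelBdd : ∀ z : ℝ, zd < (z : EReal) → (z : EReal) < zu →
    ∃ x : ℝ, ∀ ξ ∈ Lbb m, (∀ᵐ ω ∂P, (z : EReal) ≤ β ξ ω) → ∀ᵐ ω ∂P, (x : EReal) ≤ ξ ω

/-- Scale invariance of a conditional performance measure. -/
def ScaleInvariant (F : MeasurableSpace Ω) (P : @Measure Ω F)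
    (β : (Ω → EReal) → Ω → EReal) : Prop :=
  ∀ X ∈ Lbb F, ∀ c : ℝ, 0 < c → ∀ᵐ ω ∂P, β (fun ω' => (c : EReal) * X ω') ω = β X ω

/-- The set `M^z_t(X) = {ξ ∈ L^{bb}_t : β_t(X + ξ) ≥ z}`. -/
def Mset (F m : MeasurableSpace Ω) (P : @Measure Ω F)
    (β : (Ω → EReal) → Ω → EReal) (z : ℝ) (X : Ω → EReal) : Set (Ω → EReal) :=
  {ξ | ξ ∈ Lbb m ∧ ∀ᵐ ω ∂P, (z : EReal) ≤ β (fun ω' => X ω' + ξ ω') ω}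

/-- The family of simple `m`-measurable variables `φ = Σ z_i 1_{B_i}` with
`zd < φ < zu` and `ρ^{z_i} < 0` on `B_i ∩ C`. -/
def SimpleFam {F : MeasurableSpace Ω} (m : MeasurableSpace Ω) (P : @Measure Ω F)
    (ρ : ℝ → Ω → EReal) (zd zu : EReal) (C : Set Ω) : Set (Ω → EReal) :=
  {φ | ∃ (n : ℕ) (zs : Fin n → ℝ) (Bs : Fin n → Set Ω),
    (∀ i, MeasurableSet[m] (Bs i)) ∧ Pairwise (Function.onFun Disjoint Bs) ∧
    (⋃ i, Bs i) = Set.univ ∧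
    (∀ i, zd < (zs i : EReal) ∧ (zs i : EReal) < zu) ∧
    (∀ i, ∀ ω ∈ Bs i, φ ω = (zs i : EReal)) ∧
    (∀ i, ∀ᵐ ω ∂P, ω ∈ Bs i ∩ C → ρ (zs i) ω < 0)}

/-- A standard family of conditional convex risk measures `(σ^z)_{z ∈ (zd, zu)}`. -/
structure IsStdFamily (F m : MeasurableSpace Ω) (P : @Measure Ω F)
    (σ : ℝ → (Ω → EReal) → Ω → EReal) (zd zu : EReal) : Prop where
  lt_bounds : zd < zu
  maps : ∀ z : ℝ, zd < (z : EReal) → (z : EReal) < zu → ∀ X ∈ Lbb F,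
    Measurable[m] (σ z X) ∧ ∃ C : ℝ, ∀ ω, σ z X ω ≤ (C : EReal)
  boundedOnBounded : ∀ z : ℝ, zd < (z : EReal) → (z : EReal) < zu → ∀ X ∈ Lbb F,
    (∃ C : ℝ, ∀ ω, X ω ≤ (C : EReal)) → ∃ c : ℝ, ∀ ω, (c : EReal) ≤ σ z X ω
  convex : ∀ z : ℝ, zd < (z : EReal) → (z : EReal) < zu →
    ∀ X ∈ Lbb F, ∀ Y ∈ Lbb F, ∀ c : ℝ, 0 ≤ c → c ≤ 1 →
    ∀ᵐ ω ∂P, σ z (fun ω' => (c : EReal) * X ω' + ((1 - c : ℝ) : EReal) * Y ω') ω ≤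
      (c : EReal) * σ z X ω + ((1 - c : ℝ) : EReal) * σ z Y ω
  anti : ∀ z : ℝ, zd < (z : EReal) → (z : EReal) < zu → ∀ X Y : Ω → EReal,
    (∀ ω, Y ω ≤ X ω) → ∀ᵐ ω ∂P, σ z X ω ≤ σ z Y ω
  transInv : ∀ z : ℝ, zd < (z : EReal) → (z : EReal) < zu → ∀ X ∈ Lbb F, ∀ ξ ∈ Lbb m,
    ∀ᵐ ω ∂P, σ z (fun ω' => X ω' + ξ ω') ω = σ z X ω - ξ ω
  loc : ∀ z : ℝ, zd < (z : EReal) → (z : EReal) < zu → ∀ X ∈ Lbb F,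
    ∀ B : Set Ω, MeasurableSet[m] B →
    ∀ᵐ ω ∂P, ω ∈ B → σ z X ω = σ z (B.indicator X) ω
  contBelow : ∀ z : ℝ, zd < (z : EReal) → (z : EReal) < zu →
    ∀ (Xs : ℕ → Ω → EReal) (X : Ω → EReal), (∀ n, Xs n ∈ Lbb F) → X ∈ Lbb F →
    (∀ ω, Monotone fun n => Xs n ω) → (∀ ω, X ω = ⨆ n, Xs n ω) →
    ∀ᵐ ω ∂P, σ z X ω = ⨅ n, σ z (Xs n) ω
  paths : ∀ X ∈ Lbb F, ∀ᵐ ω ∂P,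
    MonotoneOn (fun z : ℝ => σ z X ω) {z : ℝ | zd < (z : EReal) ∧ (z : EReal) < zu} ∧
    ContinuousOn (fun z : ℝ => σ z X ω) {z : ℝ | zd < (z : EReal) ∧ (z : EReal) < zu}
  botLim : zd = ⊥ →
    Tendsto (fun z : ℝ => essSup (σ z (fun _ => 0)) P) atBot (𝓝 (⊥ : EReal))

/-- The set `B_X = ∩_{z ∈ (zd,zu)} {σ^z(X) ≥ 0}`. -/
def BXset (σ : ℝ → (Ω → EReal) → Ω → EReal) (zd zu : EReal) (X : Ω → EReal) : Set Ω :=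
  {ω | ∀ z : ℝ, zd < (z : EReal) → (z : EReal) < zu → 0 ≤ σ z X ω}

/-- `g` is the value at `X` of the performance measure generated by the standard
family `σ`:  `g = zd 1_{B_X} + 1_{B_X^c} esssup{φ simple : σ^{z_i}(X) < 0 on B_i ∩ B_X^c}`. -/
def GeneratedBy (F m : MeasurableSpace Ω) (P : @Measure Ω F)
    (σ : ℝ → (Ω → EReal) → Ω → EReal) (zd zu : EReal)
    (X : Ω → EReal) (g : Ω → EReal) : Prop :=
  (∀ᵐ ω ∂P, ω ∈ BXset σ zd zu X → g ω = zd) ∧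
  IsEssSupFamOn m P (SimpleFam m P (fun z => σ z X) zd zu ((BXset σ zd zu X)ᶜ)) g
    ((BXset σ zd zu X)ᶜ)

lemma my_le_of_sub_nonpos {a b : EReal} (hb : b ≠ ⊥) (h : a - b ≤ 0) : a ≤ b := by
  induction b with
  | bot => exact absurd rfl hb
  | coe c =>
      simpa using (EReal.sub_le_iff_le_add (Or.inl (EReal.coe_ne_bot c))
        (Or.inl (EReal.coe_ne_top c))).1 h
  | top => exact le_top

lemma my_isOpenS (zd zu : EReal) : IsOpen {x : ℝ | zd < (x : EReal) ∧ (x : EReal) < zu} := by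
  have h1 : IsOpen {x : ℝ | zd < (x : EReal)} :=
    isOpen_lt continuous_const continuous_coe_real_ereal
  have h2 : IsOpen {x : ℝ | (x : EReal) < zu} :=
    isOpen_lt continuous_coe_real_ereal continuous_const
  exact h1.inter h2

lemma my_coe_max (r s : ℝ) : max (r : EReal) (s : EReal) = ((max r s : ℝ) : EReal) := by
  rcases le_total r s with h | h <;>
    simp [max_eq_left, max_eq_right, h, EReal.coe_le_coe_iff]

lemma my_ereal_add_eq (x y : EReal) :
    x + y = if x = ⊥ then ⊥ else if y = ⊥ then ⊥ else if x = ⊤ then ⊤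
      else if y = ⊤ then ⊤ else ((x.toReal + y.toReal : ℝ) : EReal) := by
  induction x with
  | bot => simp
  | coe a =>
    induction y with
    | bot => simp
    | coe b => simp [← EReal.coe_add]
    | top => simp
  | top =>
    induction y with
    | bot => simp
    | coe b => simp
    | top => simp

lemma my_measurable_add {Ω : Type*} {mΩ : MeasurableSpace Ω} {f g : Ω → EReal}
    (hf : Measurable f) (hg : Measurable g) : Measurable (fun ω => f ω + g ω) := by
  have hrw : (fun ω => f ω + g ω) = fun ω =>
      if f ω = ⊥ then ⊥ else if g ω = ⊥ then ⊥ else if f ω = ⊤ then ⊤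
        else if g ω = ⊤ then ⊤ else (((f ω).toReal + (g ω).toReal : ℝ) : EReal) := by
    funext ω
    exact my_ereal_add_eq (f ω) (g ω)
  rw [hrw]
  have hfb : MeasurableSet {ω | f ω = ⊥} := hf (measurableSet_singleton ⊥)
  have hgb : MeasurableSet {ω | g ω = ⊥} := hg (measurableSet_singleton ⊥)
  have hft : MeasurableSet {ω | f ω = ⊤} := hf (measurableSet_singleton ⊤)
  have hgt : MeasurableSet {ω | g ω = ⊤} := hg (measurableSet_singleton ⊤)
  refine Measurable.ite hfb measurable_const ?_
  refine Measurable.ite hgb measurable_const ?_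
  refine Measurable.ite hft measurable_const ?_
  refine Measurable.ite hgt measurable_const ?_
  exact measurable_coe_real_ereal.comp (hf.ereal_toReal.add hg.ereal_toReal)

/-- Key lemma B : if `β Y ≥ z` a.e. then `σ^z Y ≤ 0` a.e. -/
lemma lemB {Ω : Type*} {F m : MeasurableSpace Ω} {P : @Measure Ω F}
    {β : (Ω → EReal) → Ω → EReal} {σ : ℝ → (Ω → EReal) → Ω → EReal} {zd zu : EReal}
    (hσ : IsStdFamily F m P σ zd zu)
    {z : ℝ} (hzd : zd < (z : EReal)) (hzu : (z : EReal) < zu)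
    {Y : Ω → EReal} (hY : Y ∈ Lbb F)
    (hgenY : GeneratedBy F m P σ zd zu Y (β Y))
    (hβ : ∀ᵐ ω ∂P, (z : EReal) ≤ β Y ω) :
    ∀ᵐ ω ∂P, σ z Y ω ≤ 0 := by
  classical
  set C : Set Ω := (BXset σ zd zu Y)ᶜ with hC
  have hBnull : ∀ᵐ ω ∂P, ω ∈ C := by
    filter_upwards [hgenY.1, hβ] with ω h1 h2
    intro hB
    exact absurd (h2.trans_eq (h1 hB)) (not_le.2 hzd)
  -- step for each rational level q ∈ (zd, z)
  have hq : ∀ q : ℚ, zd < ((q : ℝ) : EReal) → ((q : ℝ) : EReal) < (z : EReal) →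
      ∀ᵐ ω ∂P, σ (q : ℝ) Y ω ≤ 0 := by
    intro q hq1 hq2
    have hq2' : ((q : ℝ) : EReal) < zu := hq2.trans hzu
    have hmq : Measurable[m] (σ (q : ℝ) Y) := (hσ.maps (q : ℝ) hq1 hq2' Y hY).1
    set A : Set Ω := {ω | 0 < σ (q : ℝ) Y ω} with hA
    have hAm : MeasurableSet[m] A := measurableSet_lt measurable_const hmq
    set η : Ω → EReal := A.piecewise (fun _ => ((q : ℝ) : EReal)) (fun _ => ⊤) with hη
    have hηm : Measurable[m] η := Measurable.piecewise hAm measurable_const measurable_const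
    have hub : ∀ φ ∈ SimpleFam m P (fun w => σ w Y) zd zu C,
        ∀ᵐ ω ∂P, ω ∈ C → φ ω ≤ η ω := by
      rintro φ ⟨n, zs, Bs, hBm, hdisj, hcov, hbnd, hval, hneg⟩
      have hae : ∀ᵐ ω ∂P, (∀ i : Fin n, ω ∈ Bs i ∩ C → σ (zs i) Y ω < 0) ∧
          MonotoneOn (fun w : ℝ => σ w Y ω)
            {w : ℝ | zd < (w : EReal) ∧ (w : EReal) < zu} := by
        filter_upwards [ae_all_iff.2 hneg, hσ.paths Y hY] with ω h1 h2
        exact ⟨h1, h2.1⟩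
      filter_upwards [hae] with ω hω hCω
      obtain ⟨h1, h2⟩ := hω
      by_cases hA' : ω ∈ A
      · obtain ⟨i, hi⟩ : ∃ i, ω ∈ Bs i := by
          have : ω ∈ ⋃ i, Bs i := hcov ▸ Set.mem_univ ω
          exact Set.mem_iUnion.1 this
        have hlt := h1 i ⟨hi, hCω⟩
        have hzsq : zs i ≤ (q : ℝ) := by
          by_contra hgt
          push_neg at hgt
          have hmono : σ (q : ℝ) Y ω ≤ σ (zs i) Y ω :=
            h2 ⟨hq1, hq2'⟩ ⟨(hbnd i).1, (hbnd i).2⟩ hgt.le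
          exact absurd ((hA'.trans_le hmono).trans hlt) (lt_irrefl 0)
        have hηω : η ω = ((q : ℝ) : EReal) := Set.piecewise_eq_of_mem _ _ _ hA'
        rw [hval i ω hi, hηω]
        exact_mod_cast hzsq
      · have hηω : η ω = ⊤ := Set.piecewise_eq_of_notMem _ _ _ hA'
        rw [hηω]
        exact le_top
    have hg := hgenY.2.2 η hηm hub
    filter_upwards [hg, hβ, hBnull] with ω h1 h2 h3
    by_contra hpos
    push_neg at hpos
    have h4 : β Y ω ≤ η ω := h1 h3
    have hηω : η ω = ((q : ℝ) : EReal) :=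
      Set.piecewise_eq_of_mem _ _ _ (show ω ∈ A from hpos)
    rw [hηω] at h4
    exact absurd (h2.trans h4) (not_le.2 hq2)
  have hall : ∀ᵐ ω ∂P, ∀ q : ℚ, zd < ((q : ℝ) : EReal) → ((q : ℝ) : EReal) < (z : EReal) →
      σ (q : ℝ) Y ω ≤ 0 := by
    rw [ae_all_iff]
    intro q
    by_cases h1 : zd < ((q : ℝ) : EReal)
    · by_cases h2 : ((q : ℝ) : EReal) < (z : EReal)
      · filter_upwards [hq q h1 h2] with ω h _ _; exact h
      · filter_upwards with ω h1' h2'; exact absurd h2' h2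
    · filter_upwards with ω h1'; exact absurd h1' h1
  obtain ⟨w, hw1, hw2⟩ := EReal.exists_between_coe_real hzd
  have hw2' : w < z := by exact_mod_cast hw2
  have hseq : ∀ n : ℕ, ∃ q : ℚ, max w (z - 1 / (n + 1)) < (q : ℝ) ∧ (q : ℝ) < z := by
    intro n
    apply exists_rat_btwn
    apply max_lt hw2'
    have : (0 : ℝ) < 1 / (n + 1) := by positivity
    linarith
  choose qs hqs1 hqs2 using hseq
  have hqtend : Tendsto (fun n : ℕ => ((qs n : ℝ))) atTop (𝓝 z) := by
    have hlow : Tendsto (fun n : ℕ => z - 1 / ((n : ℝ) + 1)) atTop (𝓝 z) := by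
      have h0 := tendsto_one_div_add_atTop_nhds_zero_nat (𝕜 := ℝ)
      simpa using tendsto_const_nhds.sub h0
    refine tendsto_of_tendsto_of_tendsto_of_le_of_le hlow tendsto_const_nhds
      (fun n => ?_) (fun n => (hqs2 n).le)
    exact ((le_max_right _ _).trans_lt (hqs1 n)).le
  filter_upwards [hall, hσ.paths Y hY] with ω h1 h2
  have hz_mem : z ∈ {x : ℝ | zd < (x : EReal) ∧ (x : EReal) < zu} := ⟨hzd, hzu⟩
  have hcont : ContinuousAt (fun x : ℝ => σ x Y ω) z :=
    h2.2.continuousAt ((my_isOpenS zd zu).mem_nhds hz_mem)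
  have hlim : Tendsto (fun n : ℕ => σ ((qs n : ℝ)) Y ω) atTop (𝓝 (σ z Y ω)) :=
    hcont.tendsto.comp hqtend
  refine le_of_tendsto hlim (Eventually.of_forall fun n => ?_)
  have hwq : w < (qs n : ℝ) := (le_max_left _ _).trans_lt (hqs1 n)
  have hb1 : zd < ((qs n : ℝ) : EReal) := hw1.trans (by exact_mod_cast hwq)
  have hb2 : ((qs n : ℝ) : EReal) < (z : EReal) := by exact_mod_cast hqs2 n
  exact h1 (qs n) hb1 hb2

/-- Key lemma C : if `σ^z Y < 0` a.e. then `β Y ≥ z` a.e. -/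
lemma lemC {Ω : Type*} {F m : MeasurableSpace Ω} {P : @Measure Ω F}
    {β : (Ω → EReal) → Ω → EReal} {σ : ℝ → (Ω → EReal) → Ω → EReal} {zd zu : EReal}
    (hσ : IsStdFamily F m P σ zd zu)
    {z : ℝ} (hzd : zd < (z : EReal)) (hzu : (z : EReal) < zu)
    {Y : Ω → EReal} (hY : Y ∈ Lbb F)
    (hgenY : GeneratedBy F m P σ zd zu Y (β Y))
    (hneg : ∀ᵐ ω ∂P, σ z Y ω < 0) :
    ∀ᵐ ω ∂P, (z : EReal) ≤ β Y ω := by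
  classical
  set C : Set Ω := (BXset σ zd zu Y)ᶜ with hCdef
  have hBnull : ∀ᵐ ω ∂P, ω ∈ C := by
    filter_upwards [hneg] with ω h
    intro hB
    exact absurd (hB z hzd hzu) (not_le.2 h)
  have hq : ∀ q : ℚ, (z : EReal) < ((q : ℝ) : EReal) → ((q : ℝ) : EReal) < zu →
      ∀ᵐ ω ∂P, ω ∈ C → σ (q : ℝ) Y ω < 0 → ((q : ℝ) : EReal) ≤ β Y ω := by
    intro q h1 h2
    have h1' : zd < ((q : ℝ) : EReal) := hzd.trans h1
    set E : Set Ω := {ω | σ (q : ℝ) Y ω < 0} with hEdef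
    have hEm : MeasurableSet[m] E :=
      measurableSet_lt (hσ.maps (q : ℝ) h1' h2 Y hY).1 measurable_const
    set φ : Ω → EReal := E.piecewise (fun _ => ((q : ℝ) : EReal)) (fun _ => ((z : ℝ) : EReal))
      with hφdef
    have hmem : φ ∈ SimpleFam m P (fun w => σ w Y) zd zu C := by
      refine ⟨2, ![(q : ℝ), z], ![E, Eᶜ], ?_, ?_, ?_, ?_, ?_, ?_⟩
      · intro i
        fin_cases i
        · exact hEm
        · exact hEm.compl
      · intro i j hij
        fin_cases i <;> fin_cases j <;>
          simp_all [Function.onFun, disjoint_compl_right, disjoint_compl_left]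
      · apply Set.eq_univ_of_forall
        intro ω
        by_cases hω : ω ∈ E
        · exact Set.mem_iUnion.2 ⟨0, by simpa using hω⟩
        · exact Set.mem_iUnion.2 ⟨1, by simpa using hω⟩
      · intro i
        fin_cases i
        · exact ⟨h1', h2⟩
        · exact ⟨hzd, hzu⟩
      · intro i
        fin_cases i
        · intro ω hω
          simp only [Matrix.cons_val_zero] at hω ⊢
          exact Set.piecewise_eq_of_mem _ _ _ hω
        · intro ω hω
          simp only [Matrix.cons_val_one, Matrix.head_cons] at hω ⊢
          exact Set.piecewise_eq_of_notMem _ _ _ hω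
      · intro i
        fin_cases i
        · filter_upwards with ω hω
          simpa [hEdef] using hω.1
        · filter_upwards [hneg] with ω h hω
          simpa using h
    have hfst := hgenY.2.1 φ hmem
    filter_upwards [hfst] with ω h hωC hωE
    have h4 := h hωC
    have hφω : φ ω = ((q : ℝ) : EReal) :=
      Set.piecewise_eq_of_mem _ _ _ (show ω ∈ E from hωE)
    rwa [hφω] at h4
  have hall : ∀ᵐ ω ∂P, ∀ q : ℚ, (z : EReal) < ((q : ℝ) : EReal) →
      ((q : ℝ) : EReal) < zu → (ω ∈ C → σ (q : ℝ) Y ω < 0 → ((q : ℝ) : EReal) ≤ β Y ω) := by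
    rw [ae_all_iff]
    intro q
    by_cases h1 : (z : EReal) < ((q : ℝ) : EReal)
    · by_cases h2 : ((q : ℝ) : EReal) < zu
      · filter_upwards [hq q h1 h2] with ω h _ _; exact h
      · filter_upwards with ω h1' h2'; exact absurd h2' h2
    · filter_upwards with ω h1'; exact absurd h1' h1
  obtain ⟨w, hw1, hw2⟩ := EReal.exists_between_coe_real hzu
  have hw1' : z < w := by exact_mod_cast hw1
  filter_upwards [hall, hneg, hBnull, hσ.paths Y hY] with ω h1 h2 h3 h4
  have hz_mem : z ∈ {x : ℝ | zd < (x : EReal) ∧ (x : EReal) < zu} := ⟨hzd, hzu⟩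
  have hcont : ContinuousAt (fun x : ℝ => σ x Y ω) z :=
    h4.2.continuousAt ((my_isOpenS zd zu).mem_nhds hz_mem)
  have hev : ∀ᶠ x in 𝓝 z, σ x Y ω < 0 := hcont (Iio_mem_nhds h2)
  obtain ⟨ε, hε, hball⟩ := Metric.eventually_nhds_iff.1 hev
  obtain ⟨q, hq1, hq2⟩ := exists_rat_btwn (lt_min hw1' (by linarith : z < z + ε))
  have hq2w : (q : ℝ) < w := hq2.trans_le (min_le_left _ _)
  have hq2e : (q : ℝ) < z + ε := hq2.trans_le (min_le_right _ _)
  have hdist : dist ((q : ℝ)) z < ε := by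
    rw [Real.dist_eq, abs_lt]
    constructor <;> linarith
  have hfq : σ (q : ℝ) Y ω < 0 := hball hdist
  have hb1 : (z : EReal) < ((q : ℝ) : EReal) := by exact_mod_cast hq1
  have hb2 : ((q : ℝ) : EReal) < zu := (by exact_mod_cast hq2w : ((q : ℝ) : EReal) < (w : EReal)).trans_le hw2.le
  exact hb1.le.trans (h1 q hb1 hb2 h3 hfq)

/-- uniqueness of the generating family: any standard family `(σ^z_t)`
generating the CPM `β_t` coincides with the induced family `(ρ^z_t)`. -/
theorem stmt_16 {Ω : Type*} (F m : MeasurableSpace Ω) (hm : m ≤ F) (P : @Measure Ω F)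
    (β : (Ω → EReal) → Ω → EReal) (zd zu : EReal)
    (hCPM : IsCPM F m P β zd zu)
    (ρ : ℝ → (Ω → EReal) → Ω → EReal)
    (hρ : ∀ z : ℝ, zd < (z : EReal) → (z : EReal) < zu → ∀ X ∈ Lbb F,
      IsEssInfFam m P (Mset F m P β z X) (ρ z X))
    (σ : ℝ → (Ω → EReal) → Ω → EReal)
    (hσ : IsStdFamily F m P σ zd zu)
    (hgen : ∀ X ∈ Lbb F, GeneratedBy F m P σ zd zu X (β X)) :
    ∀ z : ℝ, zd < (z : EReal) → (z : EReal) < zu → ∀ X ∈ Lbb F,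
      ∀ᵐ ω ∂P, σ z X ω = ρ z X ω := by
  intro z hzd hzu X hX
  obtain ⟨hρmeas, hρlb, hρmax⟩ := hρ z hzd hzu X hX
  obtain ⟨hσmeas, Cb, hCb⟩ := hσ.maps z hzd hzu X hX
  obtain ⟨cX, hcX⟩ := hX.2
  -- Part 1 : σ^z X ≤ ρ^z X a.e.
  have h1 : ∀ᵐ ω ∂P, σ z X ω ≤ ρ z X ω := by
    apply hρmax (σ z X) hσmeas
    rintro ξ ⟨⟨hξm, cξ, hcξ⟩, hβξ⟩
    have hξF : Measurable[F] ξ := hξm.mono hm le_rfl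
    have hYLbb : (fun ω' => X ω' + ξ ω') ∈ Lbb F :=
      ⟨my_measurable_add hX.1 hξF, cX + cξ, fun ω => by
        rw [EReal.coe_add]; exact add_le_add (hcX ω) (hcξ ω)⟩
    have hB := lemB hσ hzd hzu hYLbb (hgen _ hYLbb) hβξ
    have htr := hσ.transInv z hzd hzu X hX ξ ⟨hξm, cξ, hcξ⟩
    filter_upwards [hB, htr] with ω hb ht
    rw [ht] at hb
    have hξbot : ξ ω ≠ ⊥ := ((EReal.bot_lt_coe cξ).trans_le (hcξ ω)).ne'
    exact my_le_of_sub_nonpos hξbot hb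
  -- Part 2 : ρ^z X ≤ σ^z X a.e.
  have key : ∀ K n : ℕ, ∀ᵐ ω ∂P,
      ρ z X ω ≤ max (σ z X ω) ((-(K : ℝ) : ℝ) : EReal) + ((1 / ((n : ℝ) + 1) : ℝ) : EReal) := by
    intro K n
    have hε : (0 : ℝ) < 1 / ((n : ℝ) + 1) := by positivity
    set ξ : Ω → EReal :=
      fun ω => max (σ z X ω) ((-(K : ℝ) : ℝ) : EReal) + ((1 / ((n : ℝ) + 1) : ℝ) : EReal)
      with hξdef
    have hξm : Measurable[m] ξ := my_measurable_add (hσmeas.max measurable_const) measurable_const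
    have hξlb : ∀ ω, ((-(K : ℝ) + 1 / ((n : ℝ) + 1) : ℝ) : EReal) ≤ ξ ω := fun ω => by
      rw [EReal.coe_add]; exact add_le_add (le_max_right _ _) le_rfl
    have hξLbb : ξ ∈ Lbb m := ⟨hξm, _, hξlb⟩
    have hξF : Measurable[F] ξ := hξm.mono hm le_rfl
    have hYLbb : (fun ω' => X ω' + ξ ω') ∈ Lbb F :=
      ⟨my_measurable_add hX.1 hξF, cX + (-(K : ℝ) + 1 / ((n : ℝ) + 1)), fun ω => by
        rw [EReal.coe_add]; exact add_le_add (hcX ω) (hξlb ω)⟩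
    have htr := hσ.transInv z hzd hzu X hX ξ hξLbb
    have hneg : ∀ᵐ ω ∂P, σ z (fun ω' => X ω' + ξ ω') ω < 0 := by
      filter_upwards [htr] with ω ht
      rw [ht]
      show σ z X ω -
        (max (σ z X ω) ((-(K : ℝ) : ℝ) : EReal) + ((1 / ((n : ℝ) + 1) : ℝ) : EReal)) < 0
      rcases eq_or_ne (σ z X ω) ⊥ with hbot | hbot
      · rw [hbot, EReal.bot_sub]
        exact bot_lt_iff_ne_bot.2 (by simp)
      · have htop : σ z X ω ≠ ⊤ := ((hCb ω).trans_lt (EReal.coe_lt_top Cb)).ne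
        have ha : (((σ z X ω).toReal : ℝ) : EReal) = σ z X ω := EReal.coe_toReal htop hbot
        set a := (σ z X ω).toReal
        rw [← ha, my_coe_max, ← EReal.coe_add, ← EReal.coe_sub]
        have h6 : a - (max a (-(K : ℝ)) + 1 / ((n : ℝ) + 1)) < 0 := by
          have := le_max_left a (-(K : ℝ)); linarith
        exact_mod_cast h6
    have hβY := lemC hσ hzd hzu hYLbb (hgen _ hYLbb) hneg
    have hmem : ξ ∈ Mset F m P β z X := ⟨hξLbb, hβY⟩
    filter_upwards [hρlb ξ hmem] with ω hω
    exact hω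
  have h2 : ∀ᵐ ω ∂P, ρ z X ω ≤ σ z X ω := by
    have hae := ae_all_iff.2 fun K : ℕ => ae_all_iff.2 (key K)
    filter_upwards [hae] with ω h
    rcases eq_or_ne (σ z X ω) ⊥ with hbot | hbot
    · rw [hbot]
      by_contra hlt
      push_neg at hlt
      obtain ⟨v, hv1, hv2⟩ := EReal.exists_between_coe_real hlt
      obtain ⟨K, hK⟩ := exists_nat_gt (1 - v)
      have h5 := h K 0
      rw [hbot, max_eq_right bot_le, ← EReal.coe_add] at h5
      have h6 : (v : EReal) < ((-(K : ℝ) + 1 / ((0 : ℕ) + 1 : ℝ) : ℝ) : EReal) :=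
        hv2.trans_le h5
      have h7 : v < -(K : ℝ) + 1 / ((0 : ℕ) + 1 : ℝ) := by exact_mod_cast h6
      norm_num at h7
      linarith
    · have htop : σ z X ω ≠ ⊤ := ((hCb ω).trans_lt (EReal.coe_lt_top Cb)).ne
      have ha : (((σ z X ω).toReal : ℝ) : EReal) = σ z X ω := EReal.coe_toReal htop hbot
      set a := (σ z X ω).toReal
      obtain ⟨K, hK⟩ := exists_nat_ge (-a)
      have hmax : max (σ z X ω) ((-(K : ℝ) : ℝ) : EReal) = σ z X ω := by
        rw [← ha, my_coe_max]
        exact congrArg _ (max_eq_left (neg_le.1 hK))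
      by_contra hlt
      push_neg at hlt
      rw [← ha] at hlt
      obtain ⟨v, hv1, hv2⟩ := EReal.exists_between_coe_real hlt
      have hv1' : a < v := by exact_mod_cast hv1
      obtain ⟨nn, hnn⟩ := exists_nat_one_div_lt (by linarith : (0 : ℝ) < v - a)
      have h5 := h K nn
      rw [hmax, ← ha, ← EReal.coe_add] at h5
      have h6 : (v : EReal) ≤ ((a + 1 / ((nn : ℝ) + 1) : ℝ) : EReal) := hv2.le.trans h5
      have h7 : v ≤ a + 1 / ((nn : ℝ) + 1) := by exact_mod_cast h6
      linarith
  filter_upwards [h1, h2] with ω a b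
  exact le_antisymm a b
end
end

section
/- The dynamic Gain-Loss Ratio is time consistent: for 0 ≤ s < t ≤ T and any integrable X, if GLR_t(X) > z a.s. for some z > 0, then GLR_s(X) > z a.s., where GLR_t(X) = E[X | F_t]/E[X^− | F_t] on {E[X | F_t] > 0} and 0 otherwise (with convention ξ/0 = +∞ for ξ > 0). -/
open MeasureTheory Filter Set Topology

noncomputable section

/-- If `W > 0` a.e. and `W` is integrable, then `E[W | m] > 0` a.e. -/
lemma aux_condexp_pos {Ω : Type*} {m F : MeasurableSpace Ω} (hm : m ≤ F) {P : Measure Ω}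
    [IsFiniteMeasure P] {W : Ω → ℝ} (hW : Integrable W P) (hpos : ∀ᵐ ω ∂P, 0 < W ω) :
    ∀ᵐ ω ∂P, 0 < (P[W | m]) ω := by
  have hnn : 0 ≤ᵐ[P] P[W|m] := condExp_nonneg (hpos.mono fun ω h => h.le)
  set A : Set Ω := {ω | (P[W|m]) ω ≤ 0} with hA
  have hAm : MeasurableSet[m] A := by
    exact (stronglyMeasurable_condExp (f := W) (m := m) (μ := P)).measurable measurableSet_Iic
  have hAF : MeasurableSet A := hm _ hAm
  have h1 : ∫ ω in A, W ω ∂P = ∫ ω in A, (P[W|m]) ω ∂P :=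
    (setIntegral_condExp hm hW hAm).symm
  have h2 : ∫ ω in A, (P[W|m]) ω ∂P ≤ 0 :=
    setIntegral_nonpos hAF (fun ω hω => hω)
  have hA0 : P A = 0 := by
    by_contra hne
    have hpos' : 0 < P (Function.support W ∩ A) := by
      have hsub : A ⊆ (Function.support W ∩ A) ∪ {ω | ¬ 0 < W ω} := by
        intro ω hω
        by_cases hw : 0 < W ω
        · exact Or.inl ⟨fun h0 => by simp [h0] at hw, hω⟩
        · exact Or.inr hw
      have hnull : P {ω | ¬ 0 < W ω} = 0 := by
        simpa [ae_iff] using hpos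
      have : P A ≤ P (Function.support W ∩ A) := by
        calc P A ≤ P ((Function.support W ∩ A) ∪ {ω | ¬ 0 < W ω}) := measure_mono hsub
          _ ≤ P (Function.support W ∩ A) + P {ω | ¬ 0 < W ω} := measure_union_le _ _
          _ = P (Function.support W ∩ A) := by rw [hnull, add_zero]
      exact lt_of_lt_of_le (by exact (zero_lt_iff.mpr hne)) this
    have : 0 < ∫ ω in A, W ω ∂P := by
      rw [setIntegral_pos_iff_support_of_nonneg_ae]
      · exact hpos'
      · exact ae_restrict_of_ae (hpos.mono fun ω h => h.le)
      · exact hW.integrableOn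
    linarith [h1 ▸ this, h2]
  have : ∀ᵐ ω ∂P, ¬ (P[W|m]) ω ≤ 0 := by
    rw [ae_iff]; simpa [hA] using hA0
  filter_upwards [this] with ω hω
  exact lt_of_not_ge hω

/-- the dynamic Gain-Loss Ratio is time consistent: for `s < t` and `z > 0`,
if `GLR_t(X) > z` a.s. then `GLR_s(X) > z` a.s., where
`GLR_u(X) = E[X | F_u] / E[X⁻ | F_u]` on `{E[X | F_u] > 0}` and `0` otherwise, with the
convention `ξ/0 = +∞` for `ξ > 0`. -/
theorem stmt_19 {Ω : Type*} [F : MeasurableSpace Ω] (P : Measure Ω) [IsProbabilityMeasure P]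
    (𝔽 : ℝ → MeasurableSpace Ω) (hle : ∀ t, 𝔽 t ≤ F) (hfil : Monotone 𝔽)
    (X : Ω → ℝ) (hint : Integrable X P) (hbdd : ∃ c : ℝ, ∀ ω, c ≤ X ω)
    (GLR : ℝ → Ω → EReal)
    (hGLR : ∀ (u : ℝ) (ω : Ω), GLR u ω =
      if 0 < (P[X | 𝔽 u]) ω then
        (if (P[(fun ω' => max (-X ω') 0) | 𝔽 u]) ω = 0 then (⊤ : EReal)
         else (((P[X | 𝔽 u]) ω / (P[(fun ω' => max (-X ω') 0) | 𝔽 u]) ω : ℝ) : EReal))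
      else 0)
    (s t : ℝ) (hst : s < t) (z : ℝ) (hz : 0 < z)
    (h : ∀ᵐ ω ∂P, (z : EReal) < GLR t ω) :
    ∀ᵐ ω ∂P, (z : EReal) < GLR s ω := by
  set Xm : Ω → ℝ := fun ω => max (-X ω) 0 with hXm
  have hXmInt : Integrable Xm P := hint.neg_part
  set Y : Ω → ℝ := fun ω => X ω - z * Xm ω with hY
  have hYeq : Y = X - z • Xm := by
    funext ω; simp [hY, smul_eq_mul]
  have hYInt : Integrable Y P := by
    rw [hYeq]; exact hint.sub (hXmInt.smul z)
  -- conditional expectation linearity at any time u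
  have hlin : ∀ u : ℝ, (P[Y | 𝔽 u]) =ᵐ[P]
      fun ω => (P[X | 𝔽 u]) ω - z * (P[Xm | 𝔽 u]) ω := by
    intro u
    have h1 : P[Y | 𝔽 u] =ᵐ[P] P[X | 𝔽 u] - P[z • Xm | 𝔽 u] := by
      rw [hYeq]; exact condExp_sub hint (hXmInt.smul z) (𝔽 u)
    have h2 : P[z • Xm | 𝔽 u] =ᵐ[P] z • P[Xm | 𝔽 u] := condExp_smul z Xm (𝔽 u)
    filter_upwards [h1, h2] with ω hω1 hω2
    simp only [Pi.sub_apply] at hω1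
    rw [hω1, hω2]
    simp [smul_eq_mul]
  -- equivalence: GLR u ω > z ↔ E[Y|F_u] ω > 0, a.e.
  have hiff : ∀ u : ℝ, ∀ᵐ ω ∂P, ((z : EReal) < GLR u ω ↔ 0 < (P[Y | 𝔽 u]) ω) := by
    intro u
    have hnn : 0 ≤ᵐ[P] P[Xm | 𝔽 u] :=
      condExp_nonneg (Eventually.of_forall fun ω => le_max_right _ _)
    filter_upwards [hlin u, hnn] with ω hωlin hωnn
    simp only [Pi.zero_apply] at hωnn
    set a : ℝ := (P[X | 𝔽 u]) ω
    set b : ℝ := (P[Xm | 𝔽 u]) ω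
    rw [hGLR u ω, hωlin]
    constructor
    · intro hgt
      by_cases ha : 0 < a
      · rw [if_pos ha] at hgt
        by_cases hb : b = 0
        · simpa [hb] using ha
        · rw [if_neg hb] at hgt
          have hb' : 0 < b := lt_of_le_of_ne hωnn (Ne.symm hb)
          have : z < a / b := by exact_mod_cast hgt
          have := (lt_div_iff₀ hb').mp this
          linarith
      · rw [if_neg ha] at hgt
        have : (z : EReal) < ((0 : ℝ) : EReal) := by simpa using hgt
        have : z < (0 : ℝ) := by exact_mod_cast this
        linarith
    · intro hpos
      have ha : 0 < a := by nlinarith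
      rw [if_pos ha]
      by_cases hb : b = 0
      · rw [if_pos hb]; exact EReal.coe_lt_top z
      · rw [if_neg hb]
        have hb' : 0 < b := lt_of_le_of_ne hωnn (Ne.symm hb)
        have : z < a / b := (lt_div_iff₀ hb').mpr (by linarith)
        exact_mod_cast this
  -- from h : GLR t > z a.e., get E[Y|F_t] > 0 a.e.
  have hYt : ∀ᵐ ω ∂P, 0 < (P[Y | 𝔽 t]) ω := by
    filter_upwards [h, hiff t] with ω hω hωiff
    exact hωiff.mp hω
  -- tower property
  have htower : P[Y | 𝔽 s] =ᵐ[P] P[(P[Y | 𝔽 t]) | 𝔽 s] :=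
    (condExp_condExp_of_le (hfil hst.le) (hle t)).symm
  have hYs : ∀ᵐ ω ∂P, 0 < (P[Y | 𝔽 s]) ω := by
    have := aux_condexp_pos (hle s) (integrable_condExp (f := Y) (m := 𝔽 t)) hYt
    filter_upwards [htower, this] with ω hω1 hω2
    rw [hω1]; exact hω2
  filter_upwards [hiff s, hYs] with ω hωiff hωpos
  exact hωiff.mpr hωpos
end
end
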